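/- The number of standard Young tableaux of shape (p,q) with p ≥ q ≥ 0, p + q = n, equals binom(n, q) − binom(n, q−1) (with binom(n,−1) = 0). Equivalently, fillings of the two-column (or two-row) shape with 1,…,n strictly decreasing along the prescribed directions are counted by this ballot-number formula. -/

import Mathlib

namespace Stmt12Aux

open Finset

def tcount {n : ℕ} (f : Fin n → Bool) : ℕ := (univ.filter fun j => f j = true).card

def pcount {n : ℕ} (f : Fin n → Bool) (k : Fin n) : ℕ :=
  (univ.filter fun j => f j = true ∧ j ≤ k).card

def Ballot (n q : ℕ) : Type :=
  {f : Fin n → Bool // tcount f = q ∧ ∀ k, 2 * pcount f k ≤ (k : ℕ) + 1}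

instance (n q : ℕ) : Finite (Ballot n q) := by unfold Ballot; exact Subtype.finite

noncomputable def N (n q : ℕ) : ℕ := Nat.card (Ballot n q)

lemma tcount_snoc {n : ℕ} (g : Fin n → Bool) (b : Bool) :
    tcount (Fin.snoc g b) = tcount g + (if b then 1 else 0) := by
  unfold tcount
  rw [card_filter, card_filter, Fin.sum_univ_castSucc]
  simp [Fin.snoc_castSucc, Fin.snoc_last]

lemma pcount_snoc_castSucc {n : ℕ} (g : Fin n → Bool) (b : Bool) (k : Fin n) :
    pcount (Fin.snoc g b) k.castSucc = pcount g k := by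
  unfold pcount
  rw [card_filter, card_filter, Fin.sum_univ_castSucc]
  simp [Fin.snoc_castSucc, Fin.snoc_last, Fin.castSucc_le_castSucc_iff,
    (Fin.castSucc_lt_last k).not_ge]

lemma pcount_last {n : ℕ} (f : Fin (n + 1) → Bool) : pcount f (Fin.last n) = tcount f := by
  unfold pcount tcount
  congr 1
  ext j
  simp [Fin.le_last]

lemma tcount_zero_iff {n : ℕ} (f : Fin n → Bool) : tcount f = 0 ↔ ∀ j, f j = false := by
  unfold tcount
  rw [Finset.card_eq_zero, Finset.filter_eq_empty_iff]
  simp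

lemma N_zero (n : ℕ) : N n 0 = 1 := by
  rw [N, Nat.card_eq_one_iff_unique]
  refine ⟨⟨fun a b => ?_⟩, ⟨⟨fun _ => false, ?_, fun k => ?_⟩⟩⟩
  · apply Subtype.ext
    funext j
    rw [(tcount_zero_iff _).1 a.2.1 j, (tcount_zero_iff _).1 b.2.1 j]
  · rw [tcount_zero_iff]; intro j; rfl
  · unfold pcount
    simp

lemma two_mul_le {n q : ℕ} (x : Ballot n q) : 2 * q ≤ n := by
  cases n with
  | zero =>
    have : q = 0 := by
      rw [← x.2.1]
      unfold tcount
      simp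
    omega
  | succ m =>
    have := x.2.2 (Fin.last m)
    rw [pcount_last, x.2.1] at this
    simpa using this

lemma N_eq_zero {n q : ℕ} (h : n < 2 * q) : N n q = 0 := by
  rw [N, Nat.card_eq_zero]
  left
  constructor
  intro x
  exact absurd (two_mul_le x) (by omega)


lemma ballot_snoc {n : ℕ} (g : Fin n → Bool) (hg : ∀ k, 2 * pcount g k ≤ (k : ℕ) + 1)
    (b : Bool) (h : 2 * tcount (Fin.snoc g b) ≤ n + 1) :
    ∀ k : Fin (n + 1), 2 * pcount (Fin.snoc g b) k ≤ (k : ℕ) + 1 := by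
  intro k
  induction k using Fin.lastCases with
  | last => rw [pcount_last]; simpa using h
  | cast k => rw [pcount_snoc_castSucc]; simpa using hg k

def extend {n q : ℕ} (h2 : 2 * (q + 1) ≤ n + 1) :
    Ballot n (q + 1) ⊕ Ballot n q → Ballot (n + 1) (q + 1) :=
  fun x =>
    match x with
    | Sum.inl g => ⟨Fin.snoc g.1 false, by rw [tcount_snoc, g.2.1]; simp,
        ballot_snoc g.1 g.2.2 false (by rw [tcount_snoc, g.2.1]; simpa using h2)⟩
    | Sum.inr g => ⟨Fin.snoc g.1 true, by rw [tcount_snoc, g.2.1]; simp,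
        ballot_snoc g.1 g.2.2 true (by rw [tcount_snoc, g.2.1]; simpa using h2)⟩

lemma extend_bijective {n q : ℕ} (h2 : 2 * (q + 1) ≤ n + 1) :
    Function.Bijective (extend h2) := by
  constructor
  · intro x y hxy
    have hv : (extend h2 x).1 = (extend h2 y).1 := by rw [hxy]
    match x, y with
    | Sum.inl a, Sum.inl b =>
      congr 1
      apply Subtype.ext
      have := congrArg Fin.init hv
      simpa [extend, Fin.init_snoc] using this
    | Sum.inl a, Sum.inr b =>
      exfalso
      have := congrFun hv (Fin.last n)
      simp [extend, Fin.snoc_last] at this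
    | Sum.inr a, Sum.inl b =>
      exfalso
      have := congrFun hv (Fin.last n)
      simp [extend, Fin.snoc_last] at this
    | Sum.inr a, Sum.inr b =>
      congr 1
      apply Subtype.ext
      have := congrArg Fin.init hv
      simpa [extend, Fin.init_snoc] using this
  · rintro ⟨f, hq, hb⟩
    have hsnoc : Fin.snoc (Fin.init f) (f (Fin.last n)) = f := Fin.snoc_init_self f
    have hball : ∀ k, 2 * pcount (Fin.init f) k ≤ (k : ℕ) + 1 := by
      intro k
      have := hb k.castSucc
      rw [← hsnoc, pcount_snoc_castSucc] at this
      simpa using this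
    have htc : tcount (Fin.snoc (Fin.init f) (f (Fin.last n))) = q + 1 := by rw [hsnoc]; exact hq
    rw [tcount_snoc] at htc
    cases hlast : f (Fin.last n) with
    | false =>
      refine ⟨Sum.inl ⟨Fin.init f, ?_, hball⟩, ?_⟩
      · rw [hlast] at htc; simpa using htc
      · apply Subtype.ext
        simp only [extend]
        rw [← hlast, hsnoc]
    | true =>
      refine ⟨Sum.inr ⟨Fin.init f, ?_, hball⟩, ?_⟩
      · rw [hlast] at htc; simp at htc; omega
      · apply Subtype.ext
        simp only [extend]
        rw [← hlast, hsnoc]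

lemma N_rec {n q : ℕ} (h2 : 2 * (q + 1) ≤ n + 1) :
    N (n + 1) (q + 1) = N n (q + 1) + N n q := by
  rw [N, N, N, ← Nat.card_sum]
  exact (Nat.card_eq_of_bijective _ (extend_bijective h2)).symm


lemma key : ∀ n p q : ℕ, p + q = n → q ≤ p →
    N n q + (if q = 0 then 0 else n.choose (q - 1)) = n.choose q := by
  intro n
  induction n using Nat.strong_induction_on with
  | _ n ih =>
    intro p q hn hqp
    cases q with
    | zero => simp [N_zero]
    | succ q' =>
      obtain ⟨m, rfl⟩ : ∃ m, n = m + 1 := ⟨p + q', by omega⟩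
      have hm : p + q' = m := by omega
      have h2 : 2 * (q' + 1) ≤ m + 1 := by omega
      have hrec : N (m + 1) (q' + 1) = N m (q' + 1) + N m q' := N_rec h2
      have ih2 : N m q' + (if q' = 0 then 0 else m.choose (q' - 1)) = m.choose q' :=
        ih m (by omega) p q' hm (by omega)
      have pascal : (m + 1).choose (q' + 1) = m.choose q' + m.choose (q' + 1) :=
        Nat.choose_succ_succ m q'
      rw [if_neg (Nat.succ_ne_zero q'), Nat.add_sub_cancel]
      by_cases hp : q' + 1 ≤ p - 1
      · have hp1 : p - 1 + (q' + 1) = m := by omega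
        have ih1 : N m (q' + 1) + m.choose q' = m.choose (q' + 1) := by
          have := ih m (by omega) (p - 1) (q' + 1) hp1 hp
          rw [if_neg (Nat.succ_ne_zero q'), Nat.add_sub_cancel] at this
          exact this
        cases q' with
        | zero =>
          have c1 : (m + 1).choose 0 = 1 := Nat.choose_zero_right _
          have c2 : m.choose 0 = 1 := Nat.choose_zero_right _
          rw [if_pos rfl] at ih2
          omega
        | succ q'' =>
          have pascal2 : (m + 1).choose (q'' + 1) = m.choose q'' + m.choose (q'' + 1) :=
            Nat.choose_succ_succ m q''
          rw [if_neg (Nat.succ_ne_zero q''), Nat.add_sub_cancel] at ih2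
          omega
      · have hpq : p = q' + 1 := by omega
        have hm2 : m = 2 * q' + 1 := by omega
        have hN0 : N m (q' + 1) = 0 := N_eq_zero (by omega)
        have hsymm : m.choose (q' + 1) = m.choose q' := by
          have hd : m - (q' + 1) = q' := by omega
          have := Nat.choose_symm (n := m) (k := q' + 1) (by omega)
          rw [hd] at this
          exact this.symm
        cases q' with
        | zero =>
          have c1 : (m + 1).choose 0 = 1 := Nat.choose_zero_right _
          have c2 : m.choose 0 = 1 := Nat.choose_zero_right _
          rw [if_pos rfl] at ih2
          omega
        | succ q'' =>
          have pascal2 : (m + 1).choose (q'' + 1) = m.choose q'' + m.choose (q'' + 1) :=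
            Nat.choose_succ_succ m q''
          rw [if_neg (Nat.succ_ne_zero q''), Nat.add_sub_cancel] at ih2
          omega


lemma card_le_of_emb_le {n k : ℕ} (s : Finset (Fin n)) (h : s.card = k) (i : Fin k)
    (x : Fin n) (hx : s.orderEmbOfFin h i ≤ x) :
    (i : ℕ) + 1 ≤ (s.filter (· ≤ x)).card := by
  have hsub : (Finset.Iic i).image (s.orderEmbOfFin h) ⊆ s.filter (· ≤ x) := by
    intro y hy
    simp only [Finset.mem_image, Finset.mem_Iic] at hy
    obtain ⟨j, hj, rfl⟩ := hy
    exact Finset.mem_filter.2 ⟨Finset.orderEmbOfFin_mem _ _ _,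
      le_trans ((s.orderEmbOfFin h).monotone hj) hx⟩
  have := Finset.card_le_card hsub
  rwa [Finset.card_image_of_injective _ (s.orderEmbOfFin h).injective, Fin.card_Iic] at this

lemma emb_le_of_card_le {n k : ℕ} (s : Finset (Fin n)) (h : s.card = k) (i : Fin k)
    (x : Fin n) (hx : (i : ℕ) + 1 ≤ (s.filter (· ≤ x)).card) :
    s.orderEmbOfFin h i ≤ x := by
  by_contra hlt
  push_neg at hlt
  have hsub : s.filter (· ≤ x) ⊆ (Finset.Iio i).image (s.orderEmbOfFin h) := by
    intro y hy
    obtain ⟨hys, hyx⟩ := Finset.mem_filter.1 hy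
    obtain ⟨j, rfl⟩ : ∃ j, s.orderEmbOfFin h j = y := by
      have hr := Finset.range_orderEmbOfFin s h
      have : y ∈ Set.range (s.orderEmbOfFin h) := by rw [hr]; exact hys
      exact this
    refine Finset.mem_image.2 ⟨j, Finset.mem_Iio.2 ?_, rfl⟩
    by_contra hji
    push_neg at hji
    exact absurd (le_trans ((s.orderEmbOfFin h).monotone hji) hyx) (not_le.2 hlt)
  have := Finset.card_le_card hsub
  rw [Finset.card_image_of_injective _ (s.orderEmbOfFin h).injective, Fin.card_Iio] at this
  omega


def Tset {n : ℕ} (f : Fin n → Bool) : Finset (Fin n) := univ.filter fun j => f j = true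
def Fset {n : ℕ} (f : Fin n → Bool) : Finset (Fin n) := univ.filter fun j => f j = false

lemma mem_Tset {n : ℕ} {f : Fin n → Bool} {j : Fin n} : j ∈ Tset f ↔ f j = true := by
  simp [Tset]

lemma mem_Fset {n : ℕ} {f : Fin n → Bool} {j : Fin n} : j ∈ Fset f ↔ f j = false := by
  simp [Fset]

lemma tcount_add_fcount {n : ℕ} (f : Fin n → Bool) : tcount f + (Fset f).card = n := by
  have h := Finset.card_filter_add_card_filter_not
    (s := (univ : Finset (Fin n))) (p := fun j => f j = true)
  simp only [Bool.not_eq_true] at h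
  simpa [tcount, Fset] using h

lemma Fset_card {p q : ℕ} (b : Ballot (p + q) q) : (Fset b.1).card = p := by
  have h := tcount_add_fcount b.1
  rw [b.2.1] at h
  omega

lemma pcount_eq {n : ℕ} (f : Fin n → Bool) (k : Fin n) :
    pcount f k = ((Tset f).filter (· ≤ k)).card := by
  unfold pcount Tset
  rw [Finset.filter_filter]

lemma partition_le {n : ℕ} (f : Fin n → Bool) (k : Fin n) :
    ((Tset f).filter (· ≤ k)).card + ((Fset f).filter (· ≤ k)).card = (k : ℕ) + 1 := by
  have h := Finset.card_filter_add_card_filter_not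
    (s := Finset.Iic k) (p := fun j => f j = true)
  have e1 : (Tset f).filter (· ≤ k) = (Finset.Iic k).filter fun j => f j = true := by
    ext j; simp [Tset, Finset.mem_Iic, and_comm]
  have e2 : (Fset f).filter (· ≤ k) = (Finset.Iic k).filter fun j => ¬ f j = true := by
    ext j; simp [Fset, Finset.mem_Iic, and_comm, Bool.not_eq_true]
  rw [e1, e2, h, Fin.card_Iic]


def toTab (p q : ℕ) (hpq : q ≤ p) (b : Ballot (p + q) q) :
    {rs : (Fin p → Fin (p + q)) × (Fin q → Fin (p + q)) //
        StrictMono rs.1 ∧ StrictMono rs.2 ∧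
        (∀ i : Fin q, rs.1 (Fin.castLE hpq i) < rs.2 i) ∧
        Function.Injective (Sum.elim rs.1 rs.2)} := by
  refine ⟨((Fset b.1).orderEmbOfFin (Fset_card b), (Tset b.1).orderEmbOfFin b.2.1),
    ((Fset b.1).orderEmbOfFin (Fset_card b)).strictMono,
    ((Tset b.1).orderEmbOfFin b.2.1).strictMono, ?_, ?_⟩
  · intro i
    set t := (Tset b.1).orderEmbOfFin b.2.1 i with ht
    have h1 : (i : ℕ) + 1 ≤ ((Tset b.1).filter (· ≤ t)).card :=
      card_le_of_emb_le _ _ i t le_rfl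
    have hb := b.2.2 t
    rw [pcount_eq] at hb
    have hpart := partition_le b.1 t
    have h2 : ((i : ℕ)) + 1 ≤ ((Fset b.1).filter (· ≤ t)).card := by omega
    have h3 : (Fset b.1).orderEmbOfFin (Fset_card b) (Fin.castLE hpq i) ≤ t :=
      emb_le_of_card_le _ _ _ t (by simpa using h2)
    refine lt_of_le_of_ne h3 ?_
    intro heq
    dsimp only at heq
    have hmf : b.1 ((Fset b.1).orderEmbOfFin (Fset_card b) (Fin.castLE hpq i)) = false :=
      mem_Fset.1 (Finset.orderEmbOfFin_mem _ _ _)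
    have hmt : b.1 t = true := mem_Tset.1 (Finset.orderEmbOfFin_mem _ _ _)
    rw [heq, hmt] at hmf
    exact Bool.noConfusion hmf
  · intro x y hxy
    match x, y with
    | Sum.inl a, Sum.inl c =>
      simp only [Sum.elim_inl] at hxy
      rw [((Fset b.1).orderEmbOfFin (Fset_card b)).injective hxy]
    | Sum.inr a, Sum.inr c =>
      simp only [Sum.elim_inr] at hxy
      rw [((Tset b.1).orderEmbOfFin b.2.1).injective hxy]
    | Sum.inl a, Sum.inr c =>
      exfalso
      simp only [Sum.elim_inl, Sum.elim_inr] at hxy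
      have hmf : b.1 ((Fset b.1).orderEmbOfFin (Fset_card b) a) = false :=
        mem_Fset.1 (Finset.orderEmbOfFin_mem _ _ _)
      have hmt : b.1 ((Tset b.1).orderEmbOfFin b.2.1 c) = true :=
        mem_Tset.1 (Finset.orderEmbOfFin_mem _ _ _)
      rw [hxy, hmt] at hmf
      exact Bool.noConfusion hmf
    | Sum.inr a, Sum.inl c =>
      exfalso
      simp only [Sum.elim_inl, Sum.elim_inr] at hxy
      have hmf : b.1 ((Fset b.1).orderEmbOfFin (Fset_card b) c) = false :=
        mem_Fset.1 (Finset.orderEmbOfFin_mem _ _ _)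
      have hmt : b.1 ((Tset b.1).orderEmbOfFin b.2.1 a) = true :=
        mem_Tset.1 (Finset.orderEmbOfFin_mem _ _ _)
      rw [← hxy, hmt] at hmf
      exact Bool.noConfusion hmf


lemma toTab_bijective (p q : ℕ) (hpq : q ≤ p) : Function.Bijective (toTab p q hpq) := by
  constructor
  · intro a c h
    have h2 : ⇑((Tset a.1).orderEmbOfFin a.2.1) = ⇑((Tset c.1).orderEmbOfFin c.2.1) :=
      congrArg (fun x => x.1.2) h
    have hr : (Tset a.1 : Set (Fin (p + q))) = (Tset c.1 : Set (Fin (p + q))) := by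
      rw [← Finset.range_orderEmbOfFin (Tset a.1) a.2.1,
        ← Finset.range_orderEmbOfFin (Tset c.1) c.2.1, h2]
    have hT : Tset a.1 = Tset c.1 := Finset.coe_inj.1 hr
    apply Subtype.ext
    funext j
    have : (j ∈ Tset a.1) = (j ∈ Tset c.1) := by rw [hT]
    rw [mem_Tset, mem_Tset] at this
    have hiff : a.1 j = true ↔ c.1 j = true := iff_of_eq this
    cases ha : a.1 j <;> cases hc : c.1 j <;> simp_all
  · rintro ⟨⟨r1, r2⟩, hm1, hm2, hcol, hinj⟩
    simp only at hm1 hm2 hcol hinj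
    -- indicator function of the image of r2
    set f : Fin (p + q) → Bool := fun j => decide (∃ i, r2 i = j) with hf
    have hfT : ∀ j, f j = true ↔ ∃ i, r2 i = j := by intro j; simp [hf]
    have hr1F : ∀ x, f (r1 x) = false := by
      intro x
      rw [Bool.eq_false_iff]
      intro htr
      obtain ⟨i, hi⟩ := (hfT _).1 htr
      have : Sum.elim r1 r2 (Sum.inr i) = Sum.elim r1 r2 (Sum.inl x) := hi
      exact Sum.inr_ne_inl (hinj this)
    -- Tset f is the image of r2
    have hTim : Tset f = Finset.image r2 Finset.univ := by
      ext j
      rw [mem_Tset, hfT]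
      simp [eq_comm]
    have htc : tcount f = q := by
      have : tcount f = (Tset f).card := rfl
      rw [this, hTim, Finset.card_image_of_injective _ hm2.injective]
      simp
    -- r2 is the enumeration of Tset f
    have hr2mem : ∀ i, r2 i ∈ Tset f := by
      intro i; rw [mem_Tset, hfT]; exact ⟨i, rfl⟩
    have hr2eq : r2 = ⇑((Tset f).orderEmbOfFin htc) :=
      Finset.orderEmbOfFin_unique htc hr2mem hm2
    -- ballot property
    have hball : ∀ k, 2 * pcount f k ≤ (k : ℕ) + 1 := by
      intro k
      rw [pcount_eq]
      set a := ((Tset f).filter (· ≤ k)).card with ha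
      rcases Nat.eq_zero_or_pos a with h0 | hpos
      · omega
      · have haq : a ≤ q := by
          have hq1 : ((Tset f).filter (· ≤ k)).card ≤ (Tset f).card :=
            Finset.card_le_card (Finset.filter_subset _ _)
          have hq2 : (Tset f).card = q := htc
          omega
        set i0 : Fin q := ⟨a - 1, by omega⟩ with hi0
        have hle : (Tset f).orderEmbOfFin htc i0 ≤ k := by
          apply emb_le_of_card_le
          simp only [hi0]
          omega
        have hr2i0 : r2 i0 ≤ k := by rw [hr2eq]; exact hle
        have hsub : (Finset.Iic i0).image (fun j => r1 (Fin.castLE hpq j)) ⊆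
            (Fset f).filter (· ≤ k) := by
          intro y hy
          obtain ⟨j, hj, rfl⟩ := Finset.mem_image.1 hy
          rw [Finset.mem_Iic] at hj
          refine Finset.mem_filter.2 ⟨mem_Fset.2 (hr1F _), ?_⟩
          exact le_trans (le_of_lt (lt_of_lt_of_le (hcol j) (hm2.monotone hj))) hr2i0
        have hinj1 : Function.Injective fun j : Fin q => r1 (Fin.castLE hpq j) :=
          fun x y hxy => Fin.castLE_injective hpq (hm1.injective hxy)
        have hcard := Finset.card_le_card hsub
        rw [Finset.card_image_of_injective _ hinj1, Fin.card_Iic] at hcard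
        have hpart := partition_le f k
        simp only [hi0] at hcard
        omega
    -- r1 is the enumeration of Fset f
    have hFc : (Fset f).card = p := Fset_card (⟨f, htc, hball⟩ : Ballot (p + q) q)
    have hr1eq : r1 = ⇑((Fset f).orderEmbOfFin hFc) :=
      Finset.orderEmbOfFin_unique hFc (fun x => mem_Fset.2 (hr1F x)) hm1
    refine ⟨⟨f, htc, hball⟩, ?_⟩
    apply Subtype.ext
    dsimp only [toTab]
    rw [Prod.mk.injEq]
    exact ⟨hr1eq.symm, hr2eq.symm⟩

lemma card_tab (p q : ℕ) (hpq : q ≤ p) :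
    Nat.card {rs : (Fin p → Fin (p + q)) × (Fin q → Fin (p + q)) //
        StrictMono rs.1 ∧ StrictMono rs.2 ∧
        (∀ i : Fin q, rs.1 (Fin.castLE hpq i) < rs.2 i) ∧
        Function.Injective (Sum.elim rs.1 rs.2)} = N (p + q) q :=
  (Nat.card_eq_of_bijective _ (toTab_bijective p q hpq)).symm

end Stmt12Aux

/-- The number of standard Young tableaux of shape `(p,q)` with `p ≥ q ≥ 0`, `n = p + q`,
equals `C(n,q) − C(n,q−1)` (with `C(n,−1) = 0`). A standard tableau is encoded as a pair
of strictly increasing rows of lengths `p` and `q` with entries in `{0,…,n−1}`, strictly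
increasing down the columns, and using each entry exactly once (injectivity). -/
theorem stmt12 (p q : ℕ) (hpq : q ≤ p) :
    Nat.card {rs : (Fin p → Fin (p + q)) × (Fin q → Fin (p + q)) //
        StrictMono rs.1 ∧ StrictMono rs.2 ∧
        (∀ i : Fin q, rs.1 (Fin.castLE hpq i) < rs.2 i) ∧
        Function.Injective (Sum.elim rs.1 rs.2)} =
      (p + q).choose q - (if q = 0 then 0 else (p + q).choose (q - 1)) := by
  rw [Stmt12Aux.card_tab p q hpq]
  have h := Stmt12Aux.key (p + q) p q rfl hpq
  omega
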